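/- With φ_n as defined (φ_n(ξ) = |ξ|^p for |ξ| ≤ n, quadratic extension for |ξ| > n, p ≥ 2), the inequalities |φ_n'(ξ)| ≤ p(1 + φ_n(ξ)) and φ_n''(ξ) ≤ p(p−1)(1 + φ_n(ξ)) hold for all ξ ∈ ℝ. -/

import Mathlib

open Real

noncomputable def phiN (p : ℝ) (n : ℕ) (ξ : ℝ) : ℝ :=
  if |ξ| ≤ (n : ℝ) then |ξ| ^ p
  else (n : ℝ) ^ (p - 2) *
    (p * (p - 1) / 2 * ξ ^ 2 - p * (p - 2) * n * |ξ| + (p - 1) * (p - 2) / 2 * n ^ 2)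

noncomputable def phiN'' (p : ℝ) (n : ℕ) (ξ : ℝ) : ℝ :=
  if |ξ| ≤ (n : ℝ) then p * (p - 1) * |ξ| ^ (p - 2)
  else (n : ℝ) ^ (p - 2) * p * (p - 1)

lemma sq_rpow_eq_abs (x p : ℝ) : (x ^ 2 : ℝ) ^ (p / 2) = |x| ^ p := by
  rw [← sq_abs x, ← Real.rpow_natCast |x| 2, ← Real.rpow_mul (abs_nonneg x)]
  congr 1
  push_cast
  ring

lemma phiN_neg (p : ℝ) (n : ℕ) (ξ : ℝ) : phiN p n (-ξ) = phiN p n ξ := by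
  simp [phiN, abs_neg, neg_sq]

lemma Q_ge_sq {p n t : ℝ} (hp : 2 ≤ p) (hn : 1 ≤ n) (ht : n ≤ t) :
    n ^ 2 ≤ p * (p - 1) / 2 * t ^ 2 - p * (p - 2) * n * t + (p - 1) * (p - 2) / 2 * n ^ 2 := by
  nlinarith [mul_nonneg (mul_nonneg (by linarith : (0:ℝ) ≤ p) (by linarith : (0:ℝ) ≤ p - 1))
      (sq_nonneg (t - n)),
    mul_nonneg (by linarith : (0:ℝ) ≤ t - n)
      (mul_nonneg (by linarith : (0:ℝ) ≤ p) (by linarith : (0:ℝ) ≤ n))]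

lemma L_le_Q {p n t : ℝ} (hp : 2 ≤ p) (hn : 1 ≤ n) (ht : n ≤ t) :
    (p - 1) * t - (p - 2) * n ≤
      p * (p - 1) / 2 * t ^ 2 - p * (p - 2) * n * t + (p - 1) * (p - 2) / 2 * n ^ 2 := by
  nlinarith [mul_nonneg (mul_nonneg (by linarith : (0:ℝ) ≤ p) (by linarith : (0:ℝ) ≤ p - 1))
      (sq_nonneg (t - n)),
    mul_nonneg (by linarith : (0:ℝ) ≤ t - n)
      (mul_nonneg (by linarith : (0:ℝ) ≤ p) (by linarith : (0:ℝ) ≤ n - 1)),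
    mul_nonneg (by linarith : (0:ℝ) ≤ n) (by linarith : (0:ℝ) ≤ n - 1),
    (by linarith : (0:ℝ) ≤ t - n)]

lemma abs_rpow_le (p : ℝ) (hp : 2 ≤ p) (q : ℝ) (hq : 0 ≤ q) (hqp : q ≤ p) (ξ : ℝ) :
    |ξ| ^ q ≤ 1 + |ξ| ^ p := by
  rcases le_or_gt |ξ| 1 with h | h
  · have h1 : |ξ| ^ q ≤ 1 := Real.rpow_le_one (abs_nonneg ξ) h hq
    have h2 : (0:ℝ) ≤ |ξ| ^ p := Real.rpow_nonneg (abs_nonneg ξ) p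
    linarith
  · have h1 : |ξ| ^ q ≤ |ξ| ^ p := Real.rpow_le_rpow_of_exponent_le h.le hqp
    linarith

lemma bound_inner (p : ℝ) (hp : 2 ≤ p) (ξ : ℝ) :
    |p / 2 * (ξ ^ 2) ^ (p / 2 - 1) * (2 * ξ)| ≤ p * (1 + |ξ| ^ p) := by
  have hp0 : (0:ℝ) ≤ p := by linarith
  have habs : |p / 2 * (ξ ^ 2) ^ (p / 2 - 1) * (2 * ξ)|
      = p * ((ξ ^ 2) ^ (p / 2 - 1) * |ξ|) := by
    rw [abs_mul, abs_mul, abs_of_nonneg (by positivity : (0:ℝ) ≤ p / 2),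
      abs_of_nonneg (Real.rpow_nonneg (sq_nonneg ξ) _), abs_mul,
      abs_of_nonneg (by norm_num : (0:ℝ) ≤ (2:ℝ))]
    ring
  rw [habs]
  have key : (ξ ^ 2) ^ (p / 2 - 1) * |ξ| ≤ 1 + |ξ| ^ p := by
    rcases le_or_gt |ξ| 1 with h | h
    · have h2 : ξ ^ 2 ≤ 1 := by nlinarith [sq_abs ξ, abs_nonneg ξ]
      have h1 : (ξ ^ 2) ^ (p / 2 - 1) ≤ 1 :=
        Real.rpow_le_one (sq_nonneg ξ) h2 (by linarith)
      have h3 : (0:ℝ) ≤ (ξ ^ 2) ^ (p / 2 - 1) := Real.rpow_nonneg (sq_nonneg ξ) _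
      have h4 : (0:ℝ) ≤ |ξ| ^ p := Real.rpow_nonneg (abs_nonneg ξ) p
      nlinarith [abs_nonneg ξ]
    · have hrw : (ξ ^ 2) ^ (p / 2 - 1) = |ξ| ^ (p - 2) := by
        rw [← sq_abs ξ, ← Real.rpow_natCast |ξ| 2, ← Real.rpow_mul (abs_nonneg ξ)]
        congr 1
        push_cast
        ring
      rw [hrw]
      have hpos : (0:ℝ) < |ξ| := by linarith
      have h1 : |ξ| ^ (p - 2) * |ξ| = |ξ| ^ (p - 1) := by
        nth_rewrite 2 [← Real.rpow_one |ξ|]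
        rw [← Real.rpow_add hpos]
        congr 1
        ring
      have h2 : |ξ| ^ (p - 1) ≤ |ξ| ^ p :=
        Real.rpow_le_rpow_of_exponent_le h.le (by linarith)
      linarith [h1, h2]
  nlinarith [Real.rpow_nonneg (abs_nonneg ξ) p,
    mul_nonneg (Real.rpow_nonneg (sq_nonneg ξ) (p/2-1)) (abs_nonneg ξ)]


lemma hasDerivAt_g (p : ℝ) (hp : 2 ≤ p) (ξ : ℝ) :
    HasDerivAt (fun x : ℝ => (x ^ 2) ^ (p / 2)) (p / 2 * (ξ ^ 2) ^ (p / 2 - 1) * (2 * ξ)) ξ := by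
  have h2 : HasDerivAt (fun x : ℝ => x ^ 2) (2 * ξ) ξ := by
    simpa [mul_comm] using hasDerivAt_pow 2 ξ
  have h3 := h2.rpow_const (p := p / 2) (Or.inr (by linarith))
  convert h3 using 1
  ring

lemma hasDerivAt_h (p : ℝ) (n : ℕ) (ξ : ℝ) :
    HasDerivAt (fun x : ℝ => (n : ℝ) ^ (p - 2) *
      (p * (p - 1) / 2 * x ^ 2 - p * (p - 2) * n * x + (p - 1) * (p - 2) / 2 * (n : ℝ) ^ 2))
      ((n : ℝ) ^ (p - 2) * (p * (p - 1) * ξ - p * (p - 2) * n)) ξ := by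
  have h2 : HasDerivAt (fun x : ℝ => x ^ 2) (2 * ξ) ξ := by
    simpa [mul_comm] using hasDerivAt_pow 2 ξ
  have := (((h2.const_mul (p * (p - 1) / 2)).sub
      ((hasDerivAt_id ξ).const_mul (p * (p - 2) * (n : ℝ)))).add_const
      ((p - 1) * (p - 2) / 2 * (n : ℝ) ^ 2)).const_mul ((n : ℝ) ^ (p - 2))
  refine this.congr_deriv ?_
  ring

lemma rpow_shift {n p : ℝ} (hnpos : 0 < n) : n ^ (p - 1) = n ^ (p - 2) * n := by
  rw [show p - 1 = p - 2 + 1 by ring, Real.rpow_add hnpos, Real.rpow_one]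

lemma sq_rpow_shift {n p : ℝ} (hnpos : 0 < n) : ((n : ℝ) ^ 2) ^ (p / 2 - 1) = n ^ (p - 2) := by
  rw [← Real.rpow_natCast n 2, ← Real.rpow_mul hnpos.le]
  congr 1
  push_cast
  ring

lemma rpow_two_shift {n p : ℝ} (hnpos : 0 < n) : n ^ p = n ^ (p - 2) * n ^ 2 := by
  rw [← Real.rpow_natCast n 2, ← Real.rpow_add hnpos]
  congr 1
  push_cast
  ring

lemma deriv_phiN_boundary (p : ℝ) (hp : 2 ≤ p) (n : ℕ) (hn : 0 < n) :
    |deriv (phiN p n) ((n : ℝ))| ≤ p * (1 + phiN p n ((n : ℝ))) := by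
  have hn1 : (1 : ℝ) ≤ (n : ℝ) := by exact_mod_cast hn
  have hnpos : (0 : ℝ) < (n : ℝ) := by linarith
  have hp0 : (0 : ℝ) ≤ p := by linarith
  have hgd : HasDerivAt (fun x : ℝ => (x ^ 2) ^ (p / 2)) (p * (n : ℝ) ^ (p - 1)) (n : ℝ) := by
    have := hasDerivAt_g p hp (n : ℝ)
    convert this using 1
    rw [sq_rpow_shift hnpos, rpow_shift hnpos]
    ring
  have hhd : HasDerivAt (fun x : ℝ => (n : ℝ) ^ (p - 2) *
      (p * (p - 1) / 2 * x ^ 2 - p * (p - 2) * n * x + (p - 1) * (p - 2) / 2 * (n : ℝ) ^ 2))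
      (p * (n : ℝ) ^ (p - 1)) (n : ℝ) := by
    have := hasDerivAt_h p n (n : ℝ)
    convert this using 1
    rw [rpow_shift hnpos]
    ring
  have hnp : phiN p n (n : ℝ) = (n : ℝ) ^ p := by
    rw [phiN, if_pos (by rw [abs_of_nonneg hnpos.le]), abs_of_nonneg hnpos.le]
  have hleft : HasDerivWithinAt (phiN p n) (p * (n : ℝ) ^ (p - 1)) (Set.Icc 0 (n : ℝ)) (n : ℝ) := by
    refine (hgd.hasDerivWithinAt).congr (fun x hx => ?_) ?_
    · rw [phiN, if_pos (by rw [abs_of_nonneg hx.1]; exact hx.2), sq_rpow_eq_abs]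
    · rw [hnp, sq_rpow_eq_abs, abs_of_nonneg hnpos.le]
  have hright : HasDerivWithinAt (phiN p n) (p * (n : ℝ) ^ (p - 1)) (Set.Ici (n : ℝ)) (n : ℝ) := by
    refine (hhd.hasDerivWithinAt).congr (fun x hx => ?_) ?_
    · rcases eq_or_lt_of_le (Set.mem_Ici.mp hx : (n : ℝ) ≤ x) with hxe | hxl
      · rw [← hxe, hnp, rpow_two_shift hnpos]
        ring
      · have hxpos : (0 : ℝ) < x := lt_trans hnpos hxl
        rw [phiN, if_neg (by rw [abs_of_nonneg hxpos.le]; exact not_le.2 hxl),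
          abs_of_nonneg hxpos.le]
    · rw [hnp, rpow_two_shift hnpos]
      ring
  have hunion : HasDerivWithinAt (phiN p n) (p * (n : ℝ) ^ (p - 1)) (Set.Ici (0 : ℝ)) (n : ℝ) := by
    have := hleft.union hright
    rwa [Set.Icc_union_Ici_eq_Ici hnpos.le] at this
  have hda : HasDerivAt (phiN p n) (p * (n : ℝ) ^ (p - 1)) (n : ℝ) :=
    hunion.hasDerivAt (Ici_mem_nhds hnpos)
  rw [hda.deriv, hnp]
  have h1 : (n : ℝ) ^ (p - 1) ≤ (n : ℝ) ^ p :=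
    Real.rpow_le_rpow_of_exponent_le hn1 (by linarith)
  have h2 : (0 : ℝ) ≤ (n : ℝ) ^ (p - 1) := Real.rpow_nonneg hnpos.le _
  rw [abs_of_nonneg (by positivity)]
  nlinarith

lemma deriv_phiN_bound_nonneg (p : ℝ) (hp : 2 ≤ p) (n : ℕ) (hn : 0 < n) {ξ : ℝ}
    (hξ : 0 ≤ ξ) : |deriv (phiN p n) ξ| ≤ p * (1 + phiN p n ξ) := by
  have hn1 : (1 : ℝ) ≤ (n : ℝ) := by exact_mod_cast hn
  have hnpos : (0 : ℝ) < (n : ℝ) := by linarith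
  have hp0 : (0 : ℝ) ≤ p := by linarith
  rcases lt_trichotomy ξ (n : ℝ) with hlt | heq | hgt
  · -- interior case
    have hev : phiN p n =ᶠ[nhds ξ] (fun x : ℝ => (x ^ 2) ^ (p / 2)) := by
      have hmem : {x : ℝ | |x| < (n : ℝ)} ∈ nhds ξ := by
        apply IsOpen.mem_nhds (isOpen_lt continuous_abs continuous_const)
        simpa [Set.mem_setOf_eq, abs_of_nonneg hξ] using hlt
      filter_upwards [hmem] with x hx
      rw [phiN, if_pos hx.le, sq_rpow_eq_abs]
    rw [hev.deriv_eq, (hasDerivAt_g p hp ξ).deriv, phiN,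
      if_pos (by rw [abs_of_nonneg hξ]; exact hlt.le)]
    exact bound_inner p hp ξ
  · rw [heq]
    exact deriv_phiN_boundary p hp n hn
  · -- outer case ξ > n
    have hev : phiN p n =ᶠ[nhds ξ] (fun x : ℝ => (n : ℝ) ^ (p - 2) *
        (p * (p - 1) / 2 * x ^ 2 - p * (p - 2) * n * x + (p - 1) * (p - 2) / 2 * (n : ℝ) ^ 2)) := by
      filter_upwards [Ioi_mem_nhds hgt] with x hx
      have hxpos : (0 : ℝ) < x := lt_trans hnpos hx
      rw [phiN, if_neg (by rw [abs_of_nonneg hxpos.le]; exact not_le.2 hx),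
        abs_of_nonneg hxpos.le]
    rw [hev.deriv_eq, (hasDerivAt_h p n ξ).deriv]
    have hQ := L_le_Q hp hn1 hgt.le
    have hQ2 := Q_ge_sq hp hn1 hgt.le
    have hc1 : (1 : ℝ) ≤ (n : ℝ) ^ (p - 2) := Real.one_le_rpow hn1 (by linarith)
    have hc0 : (0 : ℝ) ≤ (n : ℝ) ^ (p - 2) := by linarith
    have hφ : phiN p n ξ = (n : ℝ) ^ (p - 2) *
        (p * (p - 1) / 2 * ξ ^ 2 - p * (p - 2) * n * ξ + (p - 1) * (p - 2) / 2 * (n : ℝ) ^ 2) := by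
      rw [phiN, if_neg (by rw [abs_of_nonneg hξ]; exact not_le.2 hgt), abs_of_nonneg hξ]
    rw [hφ]
    have hin : (0 : ℝ) ≤ p * (p - 1) * ξ - p * (p - 2) * n := by
      nlinarith [mul_nonneg (mul_nonneg hp0 (by linarith : (0:ℝ) ≤ p - 1))
        (by linarith : (0:ℝ) ≤ ξ - n), mul_nonneg hp0 hnpos.le]
    rw [abs_of_nonneg (mul_nonneg hc0 hin)]
    set Q := p * (p - 1) / 2 * ξ ^ 2 - p * (p - 2) * n * ξ + (p - 1) * (p - 2) / 2 * (n : ℝ) ^ 2 with hQdef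
    have step1 : (n : ℝ) ^ (p - 2) * ((p - 1) * ξ - (p - 2) * n) ≤ (n : ℝ) ^ (p - 2) * Q :=
      mul_le_mul_of_nonneg_left hQ hc0
    nlinarith [mul_le_mul_of_nonneg_left step1 hp0]

theorem deriv_phiN_bounds (p : ℝ) (hp : 2 ≤ p) (n : ℕ) (hn : 0 < n) (ξ : ℝ) :
    |deriv (phiN p n) ξ| ≤ p * (1 + phiN p n ξ) ∧
    phiN'' p n ξ ≤ p * (p - 1) * (1 + phiN p n ξ) := by
  constructor
  · rcases le_or_gt 0 ξ with hξ | hξ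
    · exact deriv_phiN_bound_nonneg p hp n hn hξ
    · have heq : phiN p n = fun x => phiN p n (-x) := by
        funext x
        rw [phiN_neg]
      have h1 : deriv (phiN p n) ξ = -deriv (phiN p n) (-ξ) := by
        conv_lhs => rw [heq]
        exact deriv_comp_neg (phiN p n) ξ
      rw [h1, abs_neg, ← phiN_neg p n ξ]
      exact deriv_phiN_bound_nonneg p hp n hn (by linarith)
  · have hpp : (0:ℝ) ≤ p * (p - 1) := by nlinarith
    have hn1 : (1:ℝ) ≤ (n:ℝ) := by exact_mod_cast hn
    rcases le_or_gt |ξ| (n:ℝ) with h | h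
    · rw [phiN'', if_pos h, phiN, if_pos h]
      have h2 := abs_rpow_le p hp (p - 2) (by linarith) (by linarith) ξ
      exact mul_le_mul_of_nonneg_left h2 hpp
    · rw [phiN'', if_neg (not_le.2 h), phiN, if_neg (not_le.2 h)]
      have hQ2 := Q_ge_sq (t := |ξ|) hp hn1 h.le
      have hc1 : (1:ℝ) ≤ (n:ℝ)^(p-2) := Real.one_le_rpow hn1 (by linarith)
      have hQ1 : (1:ℝ) ≤ p * (p - 1) / 2 * ξ ^ 2 - p * (p - 2) * n * |ξ| +
          (p - 1) * (p - 2) / 2 * (n:ℝ) ^ 2 := by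
        nlinarith [sq_abs ξ]
      have h3 : (n:ℝ)^(p-2) ≤ (n:ℝ)^(p-2) * (p * (p - 1) / 2 * ξ ^ 2 - p * (p - 2) * n * |ξ| +
          (p - 1) * (p - 2) / 2 * (n:ℝ) ^ 2) := le_mul_of_one_le_right (by linarith) hQ1
      nlinarith [mul_le_mul_of_nonneg_left h3 hpp]
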